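/- Let $Q > 2$ be real, $s = \frac{Q+2}{Q-2}$, and let $S, C_1, C_2, C_3 > 0$. For $\epsilon > 0$ define $F_\epsilon(t) = \frac{S t^2}{2} - \frac{t^{1+s}}{1+s} + C_1 t^2 \epsilon^{Q-2} - C_2 t^{s} \epsilon^{\frac{Q-2}{2}} + C_3 t^{\frac{Q}{Q-2}} \epsilon^{\frac{Q}{2}}$ for $t \ge 0$. Then there exists $\epsilon_0 > 0$ such that for every $\epsilon \in (0, \epsilon_0)$, $\sup_{t \ge 0} F_\epsilon(t) < \frac{1}{Q} S^{Q/2}$. -/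

import Mathlib

open Real

lemma young_key (Q S t : ℝ) (hQ : 2 < Q) (hS : 0 < S) (ht : 0 ≤ t) :
    S * t ^ (2:ℝ) / 2 ≤ t ^ (2*Q/(Q-2)) / (2*Q/(Q-2)) + S ^ (Q/2) / Q := by
  have hd : (0:ℝ) < Q - 2 := by linarith
  have hQ0 : (0:ℝ) < Q := by linarith
  set r := Q/(Q-2) with hr
  have hr1 : 1 < r := (one_lt_div hd).2 (by linarith)
  have hr0 : 0 < r := by linarith
  have hrne : r ≠ 0 := ne_of_gt hr0
  have hconj : r.HolderConjugate (Q/2) := by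
    refine (Real.holderConjugate_iff_eq_conjExponent hr1).2 ?_
    rw [hr]
    field_simp
    ring
  set a := (2:ℝ)^(-(1/r)) * t^(2:ℝ) with ha
  set b := (2:ℝ)^(1/r - 1) * S with hb
  have ha0 : 0 ≤ a := mul_nonneg (rpow_nonneg (by norm_num) _) (rpow_nonneg ht _)
  have hb0 : 0 ≤ b := mul_nonneg (rpow_nonneg (by norm_num) _) hS.le
  have hY := Real.young_inequality_of_nonneg ha0 hb0 hconj
  have hab : a * b = S * t ^ (2:ℝ) / 2 := by
    rw [ha, hb]
    have h2 : (2:ℝ)^(-(1/r)) * (2:ℝ)^(1/r - 1) = 1/2 := by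
      rw [← Real.rpow_add (by norm_num)]
      have : -(1/r) + (1/r - 1) = -1 := by ring
      rw [this, Real.rpow_neg_one]
      norm_num
    calc (2:ℝ)^(-(1/r)) * t^(2:ℝ) * ((2:ℝ)^(1/r - 1) * S)
        = ((2:ℝ)^(-(1/r)) * (2:ℝ)^(1/r - 1)) * (t^(2:ℝ) * S) := by ring
      _ = S * t ^ (2:ℝ) / 2 := by rw [h2]; ring
  have har : a ^ r = t ^ (2*Q/(Q-2)) / 2 := by
    rw [ha, Real.mul_rpow (rpow_nonneg (by norm_num) _) (rpow_nonneg ht _),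
      ← Real.rpow_mul (by norm_num : (0:ℝ) ≤ 2), ← Real.rpow_mul ht]
    have h1 : -(1/r) * r = -1 := by field_simp
    have h2 : (2:ℝ) * r = 2*Q/(Q-2) := by rw [hr]; ring
    rw [h1, h2, Real.rpow_neg_one]
    ring
  have hbr : b ^ (Q/2) = S ^ (Q/2) / 2 := by
    rw [hb, Real.mul_rpow (rpow_nonneg (by norm_num) _) hS.le,
      ← Real.rpow_mul (by norm_num : (0:ℝ) ≤ 2)]
    have h1 : (1/r - 1) * (Q/2) = -1 := by rw [hr]; field_simp; ring
    rw [h1, Real.rpow_neg_one]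
    ring
  rw [hab, har, hbr] at hY
  calc S * t ^ (2:ℝ) / 2 ≤ t ^ (2*Q/(Q-2)) / 2 / r + S ^ (Q/2) / 2 / (Q/2) := hY
    _ = t ^ (2*Q/(Q-2)) / (2*Q/(Q-2)) + S ^ (Q/2) / Q := by
        rw [hr]; field_simp

set_option maxHeartbeats 1000000 in
/-- Quantitative heart of Lemma 9 (Lemma MPL): for all sufficiently small `ε > 0`,
`sup_{t ≥ 0} F_ε(t) < S^(Q/2)/Q`. -/
theorem stmt_17 (Q S C₁ C₂ C₃ : ℝ) (hQ : 2 < Q) (hS : 0 < S)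
    (hC₁ : 0 < C₁) (hC₂ : 0 < C₂) (hC₃ : 0 < C₃)
    (s : ℝ) (hs : s = (Q + 2) / (Q - 2))
    (F : ℝ → ℝ → ℝ)
    (hF : ∀ ε t : ℝ, F ε t = S * t ^ (2 : ℝ) / 2 - t ^ (1 + s) / (1 + s) +
      C₁ * t ^ (2 : ℝ) * ε ^ (Q - 2) - C₂ * t ^ s * ε ^ ((Q - 2) / 2) +
      C₃ * t ^ (Q / (Q - 2)) * ε ^ (Q / 2)) :
    ∃ ε₀ : ℝ, 0 < ε₀ ∧ ∀ ε : ℝ, 0 < ε → ε < ε₀ →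
      sSup (F ε '' Set.Ici 0) < 1 / Q * S ^ (Q / 2) := by
  have hd : (0:ℝ) < Q - 2 := by linarith
  have hQ0 : (0:ℝ) < Q := by linarith
  have hps : 1 + s = 2*Q/(Q-2) := by rw [hs]; field_simp; ring
  have hs1 : 1 < s := by rw [hs]; rw [lt_div_iff₀ hd]; linarith
  have hs0 : (0:ℝ) < s := by linarith
  have hp0 : (0:ℝ) < 1 + s := by linarith
  have hA1 : 1 < Q/(Q-2) := (one_lt_div hd).2 (by linarith)
  have hA0 : (0:ℝ) < Q/(Q-2) := by linarith
  have hpA : 1 + s = 2 * (Q/(Q-2)) := by rw [hps]; ring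
  have hp2 : 2 < 1 + s := by rw [hpA]; linarith
  set K := S ^ (Q/2) / Q with hK
  have hKpos : 0 < K := div_pos (Real.rpow_pos_of_pos hS _) hQ0
  -- key bound on the unperturbed functional
  have hGle : ∀ t : ℝ, 0 ≤ t → S * t ^ (2:ℝ) / 2 - t ^ (1+s) / (1+s) ≤ K := by
    intro t ht
    have h := young_key Q S t hQ hS ht
    rw [← hps] at h
    rw [hK]; linarith
  set Cc := S/2 + C₁ + C₃ with hCc
  have hCc0 : 0 < Cc := by rw [hCc]; linarith
  set t₀ := min 1 (K/(2*Cc)) with ht₀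
  have ht₀0 : 0 < t₀ := lt_min one_pos (by positivity)
  have ht₀1 : t₀ ≤ 1 := min_le_left _ _
  set m := max 2 (Q/(Q-2)) with hm
  have hmp : m < 1 + s := by
    rw [hm]
    exact max_lt (by linarith [hpA, hA1]) (by rw [hpA]; linarith)
  have hm0 : (0:ℝ) < m := lt_of_lt_of_le two_pos (le_max_left _ _)
  set T := max 1 ((2*(1+s)*Cc) ^ (1/((1+s)-m))) with hT
  have hT1 : (1:ℝ) ≤ T := le_max_left _ _
  have hT0 : (0:ℝ) < T := lt_of_lt_of_le one_pos hT1
  have ht₀T : t₀ ≤ T := le_trans ht₀1 hT1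
  have ht₀K : t₀ ≤ K/(2*Cc) := min_le_right _ _
  have hm2 : (2:ℝ) ≤ m := le_max_left _ _
  have hmA : Q/(Q-2) ≤ m := le_max_right _ _
  have hRT : (2*(1+s)*Cc) ^ (1/((1+s)-m)) ≤ T := le_max_right _ _
  clear_value K Cc t₀ m T
  -- large region: t ≥ T, 0 < ε ≤ 1 ⇒ F ε t ≤ 0
  have hlarge : ∀ ε t : ℝ, 0 < ε → ε ≤ 1 → T ≤ t → F ε t ≤ 0 := by
    intro ε t hε hε1 htT
    have ht1 : (1:ℝ) ≤ t := le_trans hT1 htT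
    have ht0 : (0:ℝ) < t := lt_of_lt_of_le one_pos ht1
    rw [hF]
    have e1 : ε ^ (Q-2) ≤ 1 := Real.rpow_le_one hε.le hε1 (by linarith)
    have e2 : ε ^ (Q/2) ≤ 1 := Real.rpow_le_one hε.le hε1 (by positivity)
    have e3 : 0 ≤ C₂ * t ^ s * ε ^ ((Q-2)/2) := by positivity
    have h2m : t ^ (2:ℝ) ≤ t ^ m := Real.rpow_le_rpow_of_exponent_le ht1 hm2
    have hAm : t ^ (Q/(Q-2)) ≤ t ^ m := Real.rpow_le_rpow_of_exponent_le ht1 hmA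
    have htm0 : 0 ≤ t ^ m := Real.rpow_nonneg ht0.le _
    -- t^(1+s) ≥ t^m * (2(1+s)Cc)
    have hRt : (2*(1+s)*Cc) ^ (1/((1+s)-m)) ≤ t := le_trans hRT htT
    have hpow : (2*(1+s)*Cc) ≤ t ^ ((1+s)-m) := by
      have hbase : (0:ℝ) < 2*(1+s)*Cc := by positivity
      have h := Real.rpow_le_rpow (Real.rpow_nonneg hbase.le _) hRt (by linarith : (0:ℝ) ≤ (1+s)-m)
      rwa [← Real.rpow_mul hbase.le, one_div_mul_cancel (ne_of_gt (by linarith : (0:ℝ) < (1+s)-m)),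
        Real.rpow_one] at h
    have hsplit : t ^ (1+s) = t ^ m * t ^ ((1+s)-m) := by
      rw [← Real.rpow_add ht0]; ring_nf
    have hkey : t ^ m * (2*(1+s)*Cc) ≤ t ^ (1+s) := by
      rw [hsplit]
      exact mul_le_mul_of_nonneg_left hpow htm0
    have hdiv : 2*Cc*t^m ≤ t ^ (1+s) / (1+s) := by
      rw [le_div_iff₀ hp0]
      calc 2*Cc*t^m*(1+s) = t^m * (2*(1+s)*Cc) := by ring
        _ ≤ t ^ (1+s) := hkey
    have m1 : C₁ * t ^ (2:ℝ) * ε ^ (Q-2) ≤ C₁ * t ^ m := by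
      calc C₁ * t ^ (2:ℝ) * ε ^ (Q-2) ≤ C₁ * t ^ (2:ℝ) * 1 :=
            mul_le_mul_of_nonneg_left e1 (by positivity)
        _ = C₁ * t ^ (2:ℝ) := by ring
        _ ≤ C₁ * t ^ m := mul_le_mul_of_nonneg_left h2m hC₁.le
    have m2 : C₃ * t ^ (Q/(Q-2)) * ε ^ (Q/2) ≤ C₃ * t ^ m := by
      calc C₃ * t ^ (Q/(Q-2)) * ε ^ (Q/2) ≤ C₃ * t ^ (Q/(Q-2)) * 1 :=
            mul_le_mul_of_nonneg_left e2 (by positivity)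
        _ = C₃ * t ^ (Q/(Q-2)) := by ring
        _ ≤ C₃ * t ^ m := mul_le_mul_of_nonneg_left hAm hC₃.le
    have m3 : S * t ^ (2:ℝ) / 2 ≤ S * t ^ m / 2 := by
      have := mul_le_mul_of_nonneg_left h2m hS.le
      linarith
    have hCctm : 0 ≤ Cc * t ^ m := mul_nonneg hCc0.le htm0
    have hsum : S * t ^ m / 2 + C₁ * t ^ m + C₃ * t ^ m = Cc * t ^ m := by
      rw [hCc]; ring
    linarith [hdiv, m1, m2, m3, e3, hCctm, hsum]
  -- small region: 0 ≤ t ≤ t₀, 0 < ε ≤ 1 ⇒ F ε t ≤ K/2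
  have hsmall : ∀ ε t : ℝ, 0 < ε → ε ≤ 1 → 0 ≤ t → t ≤ t₀ → F ε t ≤ K/2 := by
    intro ε t hε hε1 ht htt
    rw [hF]
    have e1 : ε ^ (Q-2) ≤ 1 := Real.rpow_le_one hε.le hε1 (by linarith)
    have e2 : ε ^ (Q/2) ≤ 1 := Real.rpow_le_one hε.le hε1 (by positivity)
    have e3 : 0 ≤ C₂ * t ^ s * ε ^ ((Q-2)/2) := by positivity
    have e4 : 0 ≤ t ^ (1+s) / (1+s) := by positivity
    have b1 : t ^ (2:ℝ) ≤ t₀ ^ (2:ℝ) := Real.rpow_le_rpow ht htt (by norm_num)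
    have b2 : t ^ (Q/(Q-2)) ≤ t₀ ^ (Q/(Q-2)) := Real.rpow_le_rpow ht htt hA0.le
    have c1 : t₀ ^ (2:ℝ) ≤ t₀ := by
      have := Real.rpow_le_rpow_of_exponent_ge ht₀0 ht₀1 (by norm_num : (1:ℝ) ≤ 2)
      rwa [Real.rpow_one] at this
    have c2 : t₀ ^ (Q/(Q-2)) ≤ t₀ := by
      have := Real.rpow_le_rpow_of_exponent_ge ht₀0 ht₀1 hA1.le
      rwa [Real.rpow_one] at this
    have c3 : Cc * t₀ ≤ K/2 := by
      calc Cc * t₀ ≤ Cc * (K/(2*Cc)) := mul_le_mul_of_nonneg_left ht₀K hCc0.le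
        _ = K/2 := by field_simp
    have m1 : C₁ * t ^ (2:ℝ) * ε ^ (Q-2) ≤ C₁ * t₀ := by
      calc C₁ * t ^ (2:ℝ) * ε ^ (Q-2) ≤ C₁ * t ^ (2:ℝ) * 1 :=
            mul_le_mul_of_nonneg_left e1 (by positivity)
        _ = C₁ * t ^ (2:ℝ) := by ring
        _ ≤ C₁ * t₀ := mul_le_mul_of_nonneg_left (le_trans b1 c1) hC₁.le
    have m2 : C₃ * t ^ (Q/(Q-2)) * ε ^ (Q/2) ≤ C₃ * t₀ := by
      calc C₃ * t ^ (Q/(Q-2)) * ε ^ (Q/2) ≤ C₃ * t ^ (Q/(Q-2)) * 1 :=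
            mul_le_mul_of_nonneg_left e2 (by positivity)
        _ = C₃ * t ^ (Q/(Q-2)) := by ring
        _ ≤ C₃ * t₀ := mul_le_mul_of_nonneg_left (le_trans b2 c2) hC₃.le
    have m3 : S * t ^ (2:ℝ) / 2 ≤ S * t₀ / 2 := by
      have := mul_le_mul_of_nonneg_left (le_trans b1 c1) hS.le
      linarith
    have hsum : S * t₀ / 2 + C₁ * t₀ + C₃ * t₀ = Cc * t₀ := by rw [hCc]; ring
    linarith
  -- choose ε₀
  have ht₀s : (0:ℝ) < t₀ ^ s := Real.rpow_pos_of_pos ht₀0 _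
  set δ₁ := C₂ * t₀ ^ s / (2*(C₁ * T ^ (2:ℝ) + 1)) with hδ₁
  set δ₂ := C₂ * t₀ ^ s / (2*(C₃ * T ^ (Q/(Q-2)) + 1)) with hδ₂
  have hT2pos : (0:ℝ) < C₁ * T ^ (2:ℝ) + 1 := by positivity
  have hTApos : (0:ℝ) < C₃ * T ^ (Q/(Q-2)) + 1 := by positivity
  have hδ₁0 : 0 < δ₁ := by rw [hδ₁]; positivity
  have hδ₂0 : 0 < δ₂ := by rw [hδ₂]; positivity
  refine ⟨min 1 (min (δ₁ ^ ((2:ℝ)/(Q-2))) δ₂), lt_min one_pos (lt_min (Real.rpow_pos_of_pos hδ₁0 _) hδ₂0), ?_⟩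
  intro ε hε hεε₀
  have hε1 : ε < 1 := lt_of_lt_of_le hεε₀ (min_le_left _ _)
  have hεδ₂ : ε < δ₂ := lt_of_lt_of_le hεε₀ (le_trans (min_le_right _ _) (min_le_right _ _))
  have he0 : 0 < ε ^ ((Q-2)/2) := Real.rpow_pos_of_pos hε _
  have heδ₁ : ε ^ ((Q-2)/2) < δ₁ := by
    have hεδ : ε < δ₁ ^ ((2:ℝ)/(Q-2)) :=
      lt_of_lt_of_le hεε₀ (le_trans (min_le_right _ _) (min_le_left _ _))
    have h := Real.rpow_lt_rpow hε.le hεδ (by positivity : (0:ℝ) < (Q-2)/2)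
    rwa [← Real.rpow_mul hδ₁0.le,
      show (2:ℝ)/(Q-2) * ((Q-2)/2) = 1 by field_simp, Real.rpow_one] at h
  have hbound1 : C₁ * T ^ (2:ℝ) * ε ^ ((Q-2)/2) < C₂ * t₀ ^ s / 2 := by
    calc C₁ * T ^ (2:ℝ) * ε ^ ((Q-2)/2) ≤ (C₁ * T ^ (2:ℝ) + 1) * ε ^ ((Q-2)/2) :=
          mul_le_mul_of_nonneg_right (by linarith) he0.le
      _ < (C₁ * T ^ (2:ℝ) + 1) * δ₁ := by
          exact mul_lt_mul_of_pos_left heδ₁ hT2pos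
      _ = C₂ * t₀ ^ s / 2 := by rw [hδ₁]; field_simp
  have hbound2 : C₃ * T ^ (Q/(Q-2)) * ε < C₂ * t₀ ^ s / 2 := by
    calc C₃ * T ^ (Q/(Q-2)) * ε ≤ (C₃ * T ^ (Q/(Q-2)) + 1) * ε :=
          mul_le_mul_of_nonneg_right (by linarith) hε.le
      _ < (C₃ * T ^ (Q/(Q-2)) + 1) * δ₂ := mul_lt_mul_of_pos_left hεδ₂ hTApos
      _ = C₂ * t₀ ^ s / 2 := by rw [hδ₂]; field_simp
  set η := ε ^ ((Q-2)/2) * (C₂ * t₀ ^ s - C₁ * T ^ (2:ℝ) * ε ^ ((Q-2)/2) - C₃ * T ^ (Q/(Q-2)) * ε)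
    with hη
  have hη0 : 0 < η := by
    rw [hη]
    exact mul_pos he0 (by linarith)
  -- mid region bound
  have hmid : ∀ t : ℝ, t₀ ≤ t → t ≤ T → F ε t ≤ K - η := by
    intro t htt₀ htT
    have ht : (0:ℝ) ≤ t := le_trans ht₀0.le htt₀
    rw [hF]
    have eq1 : ε ^ (Q-2) = ε ^ ((Q-2)/2) * ε ^ ((Q-2)/2) := by
      rw [← Real.rpow_add hε]; ring_nf
    have eq2 : ε ^ (Q/2) = ε ^ ((Q-2)/2) * ε := by
      rw [show Q/2 = (Q-2)/2 + 1 by ring, Real.rpow_add hε, Real.rpow_one]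
    have b1 : t ^ (2:ℝ) ≤ T ^ (2:ℝ) := Real.rpow_le_rpow ht htT (by norm_num)
    have b2 : t ^ (Q/(Q-2)) ≤ T ^ (Q/(Q-2)) := Real.rpow_le_rpow ht htT hA0.le
    have b3 : t₀ ^ s ≤ t ^ s := Real.rpow_le_rpow ht₀0.le htt₀ hs0.le
    have hG := hGle t ht
    have m1 : C₁ * t ^ (2:ℝ) * ε ^ (Q-2) ≤ C₁ * T ^ (2:ℝ) * (ε ^ ((Q-2)/2) * ε ^ ((Q-2)/2)) := by
      rw [eq1]
      exact mul_le_mul_of_nonneg_right (mul_le_mul_of_nonneg_left b1 hC₁.le) (by positivity)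
    have m2 : C₂ * t₀ ^ s * ε ^ ((Q-2)/2) ≤ C₂ * t ^ s * ε ^ ((Q-2)/2) :=
      mul_le_mul_of_nonneg_right (mul_le_mul_of_nonneg_left b3 hC₂.le) he0.le
    have m3 : C₃ * t ^ (Q/(Q-2)) * ε ^ (Q/2) ≤ C₃ * T ^ (Q/(Q-2)) * (ε ^ ((Q-2)/2) * ε) := by
      rw [eq2]
      exact mul_le_mul_of_nonneg_right (mul_le_mul_of_nonneg_left b2 hC₃.le) (by positivity)
    have hηeq : K - η = K + C₁ * T ^ (2:ℝ) * (ε ^ ((Q-2)/2) * ε ^ ((Q-2)/2))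
        - C₂ * t₀ ^ s * ε ^ ((Q-2)/2) + C₃ * T ^ (Q/(Q-2)) * (ε ^ ((Q-2)/2) * ε) := by
      rw [hη]; ring
    linarith
  -- conclude
  have hKeq : 1/Q * S ^ (Q/2) = K := by rw [hK]; ring
  rw [hKeq]
  have hne : (F ε '' Set.Ici 0).Nonempty := ⟨F ε 0, ⟨0, Set.self_mem_Ici, rfl⟩⟩
  have hub : ∀ y ∈ F ε '' Set.Ici 0, y ≤ max (K/2) (K - η) := by
    rintro y ⟨t, ht, rfl⟩
    rcases le_or_gt t t₀ with h1 | h1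
    · exact le_trans (hsmall ε t hε hε1.le ht h1) (le_max_left _ _)
    · rcases le_or_gt t T with h2 | h2
      · exact le_trans (hmid t h1.le h2) (le_max_right _ _)
      · refine le_trans (hlarge ε t hε hε1.le h2.le) ?_
        calc (0:ℝ) ≤ K/2 := by linarith
          _ ≤ max (K/2) (K - η) := le_max_left _ _
  calc sSup (F ε '' Set.Ici 0) ≤ max (K/2) (K - η) := csSup_le hne hub
    _ < K := max_lt (by linarith) (by linarith)
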